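/- For 0 < ν < 2 and ω = √(1 - ν²/4), the function F(θ) = 1 - α + ((να + 2β)/(2ω)·sin(ωθ) + α·cos(ωθ))·e^{-νθ/2} satisfies F(θ) > 0 for all θ ≥ 0 whenever β² + 2α - 1 < 0 and α ≤ 1/2. (Sufficient condition for non-vanishing of the denominator along one oscillation.) -/

import Mathlib

/-- For `0 < ν < 2`, `ω = √(1-ν²/4)`, the denominator function
`F(θ) = 1 - α + ((να+2β)/(2ω)·sin ωθ + α·cos ωθ)·e^{-νθ/2}` is positive on
`[0,∞)` whenever `β² + 2α - 1 < 0` and `α ≤ 1/2`. -/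
theorem stmt_9 (ν α β : ℝ) (hν0 : 0 < ν) (hν2 : ν < 2)
    (ω : ℝ) (hω : ω = Real.sqrt (1 - ν^2/4))
    (hcond : β^2 + 2*α - 1 < 0) (hα : α ≤ 1/2) :
    ∀ θ, 0 ≤ θ →
      0 < 1 - α + ((ν*α + 2*β)/(2*ω) * Real.sin (ω*θ) + α * Real.cos (ω*θ)) *
        Real.exp (-(ν*θ/2)) := by
  have hpos : (0:ℝ) < 1 - ν^2/4 := by nlinarith
  have hω2 : ω^2 = 1 - ν^2/4 := by rw [hω, Real.sq_sqrt hpos.le]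
  have hωpos : 0 < ω := by rw [hω]; exact Real.sqrt_pos.mpr hpos
  set A := (ν*α + 2*β)/(2*ω) with hA
  set Bp := (2*α + ν*β)/(2*ω) with hBp
  set g : ℝ → ℝ := fun t => (A * Real.sin (ω*t) + α * Real.cos (ω*t)) * Real.exp (-(ν*t/2)) with hgdef
  set h : ℝ → ℝ := fun t => (β * Real.cos (ω*t) - Bp * Real.sin (ω*t)) * Real.exp (-(ν*t/2)) with hhdef
  have hlin : ∀ t : ℝ, HasDerivAt (fun x : ℝ => ω * x) ω t := by
    intro t
    simpa using (hasDerivAt_id t).const_mul ω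
  have hexp : ∀ t : ℝ, HasDerivAt (fun x : ℝ => Real.exp (-(ν*x/2)))
      (Real.exp (-(ν*t/2)) * (-(ν/2))) t := by
    intro t
    have h1 : HasDerivAt (fun x : ℝ => -(ν*x/2)) (-(ν/2)) t := by
      simpa using ((hasDerivAt_id t).const_mul ν).div_const 2 |>.fun_neg
    simpa [Function.comp_def] using (Real.hasDerivAt_exp (-(ν*t/2))).comp t h1
  have hsin : ∀ t : ℝ, HasDerivAt (fun x : ℝ => Real.sin (ω*x)) (Real.cos (ω*t) * ω) t := by
    intro t
    exact (Real.hasDerivAt_sin (ω*t)).comp t (hlin t)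
  have hcos : ∀ t : ℝ, HasDerivAt (fun x : ℝ => Real.cos (ω*x)) (-Real.sin (ω*t) * ω) t := by
    intro t
    exact (Real.hasDerivAt_cos (ω*t)).comp t (hlin t)
  have hg : ∀ t, HasDerivAt g (h t) t := by
    intro t
    have := (((hsin t).const_mul A).fun_add ((hcos t).const_mul α)).fun_mul (hexp t)
    refine this.congr_deriv ?_
    symm
    simp only [hhdef, hA, hBp]
    have hωne : ω ≠ 0 := ne_of_gt hωpos
    field_simp
    linear_combination (4 * α * Real.sin (ω*t)) * hω2
  have hh : ∀ t, HasDerivAt h (-(g t) - ν * h t) t := by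
    intro t
    have := (((hcos t).const_mul β).fun_sub ((hsin t).const_mul Bp)).fun_mul (hexp t)
    refine this.congr_deriv ?_
    symm
    simp only [hgdef, hhdef, hA, hBp]
    have hωne : ω ≠ 0 := ne_of_gt hωpos
    field_simp
    linear_combination (4 * β * Real.sin (ω*t)) * hω2
  set E : ℝ → ℝ := fun t => g t ^ 2 + h t ^ 2 with hEdef
  have hE : ∀ t, HasDerivAt E (-(2*ν) * h t ^ 2) t := by
    intro t
    have := ((hg t).fun_pow 2).fun_add ((hh t).fun_pow 2)
    refine this.congr_deriv ?_
    symm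
    ring
  intro θ hθ
  have hanti : E θ ≤ E 0 := by
    have : AntitoneOn E (Set.Ici 0) := by
      apply antitoneOn_of_deriv_nonpos (convex_Ici 0)
      · exact fun t _ => ((hE t).continuousAt).continuousWithinAt
      · exact fun t _ => ((hE t).differentiableAt).differentiableWithinAt
      · intro t _
        rw [(hE t).deriv]
        nlinarith [sq_nonneg (h t)]
    exact this (Set.self_mem_Ici) hθ hθ
  have hE0 : E 0 = α^2 + β^2 := by
    simp [hEdef, hgdef, hhdef]
  have hg2 : g θ ^ 2 ≤ α^2 + β^2 := by
    have := sq_nonneg (h θ)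
    rw [hE0] at hanti
    simp only [hEdef] at hanti
    linarith
  have : 0 < 1 - α + g θ := by nlinarith [sq_nonneg (g θ + 1 - α)]
  simpa [hgdef, hA] using this
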